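/- Let a ∈ ℂ, R > 0, and let Ω ⊆ B(a,R) be a nonempty connected open subset of ℂ. Let K ⊆ ∂Ω be a nonempty compact set whose diameter δ satisfies 0 < δ ≤ R/2. Let x ∈ Ω and let h : Ω → ℝ be a continuous subharmonic function with h ≤ 1 on Ω and such that limsup_{z→ζ, z∈Ω} h(z) ≤ 0 for every ζ ∈ ∂Ω \ K. Then h(x) ≤ log(2R / dist(x,K)) / log(R/δ). -/

import Mathlib

open MeasureTheory

section AuxA
open Metric Complex intervalIntegral Set


lemma circleAvg (f : ℂ → ℂ) (c : ℂ) (s : ℝ) (hs : 0 < s)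
    (hd : DifferentiableOn ℂ f (closedBall c s)) :
    ∫ θ in (0:ℝ)..(2*Real.pi), f (circleMap c s θ) = (2*Real.pi : ℝ) • f c := by
  have hC := hd.circleIntegral_sub_inv_smul (Metric.mem_ball_self hs)
  have hne : ∀ θ : ℝ, circleMap (0:ℂ) s θ ≠ 0 := fun θ => circleMap_ne_center hs.ne'
  have h1 : (∮ z in C(c, s), (z - c)⁻¹ • f z)
      = ∫ θ in (0:ℝ)..(2*Real.pi), I • f (circleMap c s θ) := by
    rw [circleIntegral]
    congr 1; funext θ
    rw [deriv_circleMap, circleMap_sub_center]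
    simp only [smul_eq_mul]
    field_simp [hne θ]
  rw [h1, intervalIntegral.integral_smul] at hC
  have hI : (2 * Real.pi * I : ℂ) • f c = I • ((2*Real.pi : ℝ) • f c) := by
    simp only [smul_eq_mul, Complex.real_smul]
    push_cast; ring
  rw [hI] at hC
  exact smul_right_injective ℂ I_ne_zero hC

lemma logCircleAvg (k c : ℂ) (s : ℝ) (hs : 0 < s) (hks : s < dist c k) :
    ∫ θ in (0:ℝ)..(2*Real.pi), Real.log (‖circleMap c s θ - k‖)
      = (2*Real.pi) * Real.log (‖c - k‖) := by
  have hck : c ≠ k := by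
    intro e; rw [e, dist_self] at hks; linarith
  have hck' : c - k ≠ 0 := sub_ne_zero.2 hck
  set F : ℂ → ℂ := fun w => Complex.log ((w - k) / (c - k)) with hF
  have hslit : ∀ w ∈ closedBall c s, (w - k) / (c - k) ∈ slitPlane := by
    intro w hw
    have habs : ‖(w - k) / (c - k) - 1‖ < 1 := by
      have he : (w - k) / (c - k) - 1 = (w - c) / (c - k) := by
        field_simp
        ring
      rw [he, norm_div]
      rw [div_lt_one (norm_pos_iff.mpr hck')]
      calc ‖w - c‖ ≤ s := by
            simpa [Complex.dist_eq] using (mem_closedBall.1 hw)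
        _ < ‖c - k‖ := by simpa [Complex.dist_eq] using hks
    rw [Complex.mem_slitPlane_iff]
    left
    have h1 := Complex.abs_re_le_norm ((w - k) / (c - k) - 1)
    have h2 : |((w - k) / (c - k)).re - 1| < 1 := by
      simpa using lt_of_le_of_lt h1 habs
    have h3 := abs_lt.1 h2
    linarith [h3.1]
  have hdiffat : ∀ w ∈ closedBall c s, DifferentiableAt ℂ F w := by
    intro w hw
    exact (Complex.differentiableAt_log (hslit w hw)).comp w
      ((differentiableAt_id.sub_const k).div_const _)
  have hd : DifferentiableOn ℂ F (closedBall c s) :=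
    fun w hw => (hdiffat w hw).differentiableWithinAt
  have hC := circleAvg F c s hs hd
  have hFc : F c = 0 := by simp [hF, div_self hck']
  rw [hFc, smul_zero] at hC
  have hmem : ∀ θ : ℝ, circleMap c s θ ∈ closedBall c s := fun θ =>
    circleMap_mem_closedBall c hs.le θ
  have hcontF : Continuous fun θ : ℝ => F (circleMap c s θ) := by
    rw [continuous_iff_continuousAt]
    intro θ
    exact ((hdiffat _ (hmem θ)).continuousAt).comp (continuous_circleMap c s).continuousAt
  have hne : ∀ θ : ℝ, circleMap c s θ - k ≠ 0 := by
    intro θ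
    have h1 : dist c k ≤ dist c (circleMap c s θ) + dist (circleMap c s θ) k := dist_triangle _ _ _
    have h2 : dist c (circleMap c s θ) ≤ s := by
      rw [dist_comm]; exact mem_closedBall.1 (hmem θ)
    have : 0 < dist (circleMap c s θ) k := by linarith
    rw [← norm_pos_iff]
    simpa [Complex.dist_eq] using this
  have hre : ∀ θ : ℝ, (F (circleMap c s θ)).re
      = Real.log (‖circleMap c s θ - k‖) - Real.log (‖c - k‖) := by
    intro θ
    rw [hF]
    simp only [Complex.log_re, norm_div]
    rw [Real.log_div (norm_ne_zero_iff.mpr (hne θ)) (norm_ne_zero_iff.mpr hck')]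
  have h2pi : (0:ℝ) ≤ 2 * Real.pi := by positivity
  rw [intervalIntegral.integral_of_le h2pi] at hC
  have hint : Integrable (fun θ : ℝ => F (circleMap c s θ)) (volume.restrict (Ioc 0 (2*Real.pi))) :=
    (hcontF.integrableOn_Ioc)
  have hCre : ∫ θ in Ioc (0:ℝ) (2*Real.pi), (F (circleMap c s θ)).re = 0 := by
    have := integral_re (𝕜 := ℂ) hint
    simp only [RCLike.re_to_complex] at this
    rw [this, hC]
    simp
  have hgint : Integrable (fun θ : ℝ => Real.log (‖circleMap c s θ - k‖))
      (volume.restrict (Ioc 0 (2*Real.pi))) := by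
    exact Continuous.integrableOn_Ioc <|
      (continuous_norm.comp ((continuous_circleMap c s).sub continuous_const)).log
        (fun θ => norm_ne_zero_iff.mpr (hne θ))
  rw [intervalIntegral.integral_of_le h2pi]
  have hsplit : ∫ θ in Ioc (0:ℝ) (2*Real.pi), (F (circleMap c s θ)).re
      = (∫ θ in Ioc (0:ℝ) (2*Real.pi), Real.log (‖circleMap c s θ - k‖))
        - (2*Real.pi) * Real.log (‖c - k‖) := by
    rw [setIntegral_congr_fun measurableSet_Ioc (fun θ _ => hre θ), integral_sub hgint
      (integrableOn_const (C := Real.log ‖c - k‖) measure_Ioc_lt_top.ne)]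
    congr 1
    rw [setIntegral_const]
    simp [Real.volume_Ioc, ENNReal.toReal_ofReal h2pi, Real.pi_pos.le]
  rw [hsplit] at hCre
  linarith

end AuxA

section AuxB
open Metric Complex intervalIntegral Set Real




lemma logBallAvg (k c : ℂ) (r : ℝ) (hr : 0 < r) (hk : k ∉ closedBall c r) :
    ⨍ w in closedBall c r, Real.log (‖w - k‖)
      = Real.log (‖c - k‖) := by
  have hrk : r < dist c k := by
    by_contra hcon
    exact hk (by simpa [Metric.mem_closedBall, dist_comm] using not_lt.1 hcon)
  set φ : ℂ → ℝ := fun w => Real.log (‖w - k‖) with hφ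
  have hφmeas : Measurable φ :=
    Real.measurable_log.comp (continuous_norm.comp
      (continuous_id.sub continuous_const)).measurable
  -- continuity of φ away from k
  have hφcont : ∀ w : ℂ, w ≠ k → ContinuousAt φ w := by
    intro w hw
    apply ContinuousAt.log
    · exact (continuous_norm.comp (continuous_id.sub continuous_const)).continuousAt
    · simpa [sub_eq_zero] using (norm_ne_zero_iff.mpr (sub_ne_zero.2 hw))
  have hball_ne : ∀ w ∈ closedBall c r, w ≠ k := by
    intro w hw he; exact hk (he ▸ hw)
  -- bound for φ on the closed ball
  obtain ⟨M, hM⟩ : ∃ M, ∀ w ∈ closedBall c r, ‖φ w‖ ≤ M := by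
    have hc : ContinuousOn φ (closedBall c r) := fun w hw =>
      (hφcont w (hball_ne w hw)).continuousWithinAt
    exact (isCompact_closedBall c r).exists_bound_of_continuousOn hc
  -- step 1 : translate to a ball centered at the origin
  have step1 : ∫ w in closedBall c r, φ w
      = ∫ z, Set.indicator (closedBall (0:ℂ) r) (fun z => φ (c + z)) z := by
    rw [← MeasureTheory.integral_indicator measurableSet_closedBall]
    rw [← integral_add_left_eq_self (fun w => Set.indicator (closedBall c r) φ w) c]
    congr 1; funext z
    have hmem : c + z ∈ closedBall c r ↔ z ∈ closedBall (0:ℂ) r := by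
      simp [Metric.mem_closedBall, Complex.dist_eq]
    by_cases hz : z ∈ closedBall (0:ℂ) r
    · rw [Set.indicator_of_mem (hmem.2 hz), Set.indicator_of_mem hz]
    · rw [Set.indicator_of_notMem (fun hc' => hz (hmem.1 hc')), Set.indicator_of_notMem hz]
  set G : ℂ → ℝ := Set.indicator (closedBall (0:ℂ) r) (fun z => φ (c + z)) with hG
  -- step 2 : polar coordinates
  have step2 : ∫ z, G z = ∫ p in polarCoord.target, p.1 • G (Complex.polarCoord.symm p) :=
    (Complex.integral_comp_polarCoord_symm G).symm
  -- step 3 : restrict to the rectangle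
  set Q : Set (ℝ × ℝ) := Ioc (0:ℝ) r ×ˢ Ioo (-Real.pi) Real.pi with hQ
  have hQsub : Q ⊆ polarCoord.target := by
    intro p hp
    exact ⟨hp.1.1, hp.2⟩
  have habs_symm : ∀ p : ℝ × ℝ, ‖Complex.polarCoord.symm p‖ = |p.1| :=
    Complex.norm_polarCoord_symm
  have step3 : ∫ p in polarCoord.target, p.1 • G (Complex.polarCoord.symm p)
      = ∫ p in Q, p.1 • G (Complex.polarCoord.symm p) := by
    apply setIntegral_eq_of_subset_of_ae_diff_eq_zero
      (polarCoord.open_target.measurableSet.nullMeasurableSet) hQsub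
    apply Filter.Eventually.of_forall
    rintro ⟨s, θ⟩ ⟨hmem, hnot⟩
    have hs : 0 < s := hmem.1
    have hsr : r < s := by
      by_contra hcon
      exact hnot ⟨⟨hs, not_lt.1 hcon⟩, hmem.2⟩
    have : Complex.polarCoord.symm (s, θ) ∉ closedBall (0:ℂ) r := by
      simp only [Metric.mem_closedBall, Complex.dist_eq, sub_zero]
      rw [not_le]
      calc r < s := hsr
        _ = |(s,θ).1| := (abs_of_pos hs).symm
        _ = ‖Complex.polarCoord.symm (s,θ)‖ := (habs_symm _).symm
      
    rw [hG, Set.indicator_of_notMem this, smul_zero]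
  -- identify integrand on Q with circleMap
  have hcirc : ∀ p : ℝ × ℝ, c + Complex.polarCoord.symm p = circleMap c p.1 p.2 := by
    intro p
    simp [circleMap, Complex.polarCoord_symm_apply, Complex.exp_mul_I,
      ← Complex.ofReal_cos, ← Complex.ofReal_sin]
  have step4 : ∫ p in Q, p.1 • G (Complex.polarCoord.symm p)
      = ∫ p in Q, p.1 • φ (circleMap c p.1 p.2) := by
    apply setIntegral_congr_fun (measurableSet_Ioc.prod measurableSet_Ioo)
    rintro ⟨s, θ⟩ hp
    have hs : 0 < s := hp.1.1
    have hsr : s ≤ r := hp.1.2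
    have hmem : Complex.polarCoord.symm (s, θ) ∈ closedBall (0:ℂ) r := by
      simp only [Metric.mem_closedBall, Complex.dist_eq, sub_zero]
      rw [habs_symm, abs_of_pos hs]; exact hsr
    simp only [hG, Set.indicator_of_mem hmem]
    rw [hcirc (s, θ)]
  -- integrability on Q
  have hQfin : volume Q ≠ ⊤ := by
    rw [hQ]
    apply ne_of_lt
    exact lt_of_le_of_lt (measure_mono (Set.prod_mono Ioc_subset_Icc_self Ioo_subset_Icc_self))
      (IsCompact.measure_lt_top (isCompact_Icc.prod isCompact_Icc))
  have hmeas_int : AEStronglyMeasurable (fun p : ℝ × ℝ => p.1 • φ (circleMap c p.1 p.2)) volume := by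
    apply Measurable.aestronglyMeasurable
    apply Measurable.smul measurable_fst
    apply hφmeas.comp
    have : Continuous fun p : ℝ × ℝ => circleMap c p.1 p.2 := by
      simp only [circleMap]
      exact continuous_const.add ((Complex.continuous_ofReal.comp continuous_fst).mul
        (Complex.continuous_exp.comp ((Complex.continuous_ofReal.comp continuous_snd).mul
          continuous_const)))
    exact this.measurable
  have hintQ : IntegrableOn (fun p : ℝ × ℝ => p.1 • φ (circleMap c p.1 p.2)) Q := by
    apply Measure.integrableOn_of_bounded hQfin hmeas_int (M := r * M)
    rw [ae_restrict_iff' (measurableSet_Ioc.prod measurableSet_Ioo)]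
    apply Filter.Eventually.of_forall
    rintro ⟨s, θ⟩ hp
    have hs : 0 < s := hp.1.1
    have hsr : s ≤ r := hp.1.2
    have hcm : circleMap c s θ ∈ closedBall c r :=
      closedBall_subset_closedBall hsr (circleMap_mem_closedBall c hs.le θ)
    have hMnn : 0 ≤ M := le_trans (norm_nonneg _) (hM _ hcm)
    calc ‖s • φ (circleMap c s θ)‖ = |s| * ‖φ (circleMap c s θ)‖ := by
          simp [norm_smul]
      _ ≤ r * M := by
          apply mul_le_mul (by rw [abs_of_pos hs]; exact hsr) (hM _ hcm) (norm_nonneg _) hr.le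
  -- Fubini
  have step5 : ∫ p in Q, p.1 • φ (circleMap c p.1 p.2)
      = ∫ s in Ioc (0:ℝ) r, ∫ θ in Ioo (-Real.pi) Real.pi, s • φ (circleMap c s θ) := by
    rw [hQ]
    exact setIntegral_prod _ hintQ
  -- inner integral
  have hinner : ∀ s ∈ Ioc (0:ℝ) r, ∫ θ in Ioo (-Real.pi) Real.pi, s • φ (circleMap c s θ)
      = s • ((2*Real.pi) * φ c) := by
    intro s hs
    have hs0 : 0 < s := hs.1
    rw [MeasureTheory.integral_smul]
    congr 1
    rw [← integral_Ioc_eq_integral_Ioo, ← intervalIntegral.integral_of_le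
      (by linarith [Real.pi_pos] : -Real.pi ≤ Real.pi)]
    have hper : Function.Periodic (fun θ => φ (circleMap c s θ)) (2*Real.pi) := fun θ => by
      simp [periodic_circleMap c s θ]
    have := hper.intervalIntegral_add_eq (-Real.pi) 0
    rw [show -Real.pi + 2*Real.pi = Real.pi by ring, show (0:ℝ) + 2*Real.pi = 2*Real.pi by ring] at this
    rw [this]
    have hcc : φ c = Real.log (‖c - k‖) := rfl
    rw [hcc]
    exact logCircleAvg k c s hs0 (lt_of_le_of_lt hs.2 hrk)
  have step6 : ∫ s in Ioc (0:ℝ) r, ∫ θ in Ioo (-Real.pi) Real.pi, s • φ (circleMap c s θ)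
      = ∫ s in Ioc (0:ℝ) r, s • ((2*Real.pi) * φ c) := by
    exact setIntegral_congr_fun measurableSet_Ioc hinner
  have step7 : ∫ s in Ioc (0:ℝ) r, s • ((2*Real.pi) * φ c) = (Real.pi * r^2) * φ c := by
    rw [_root_.integral_smul_const]
    rw [← intervalIntegral.integral_of_le hr.le, integral_id]
    simp only [smul_eq_mul]
    ring
  -- put everything together
  have htotal : ∫ w in closedBall c r, φ w = (Real.pi * r^2) * φ c := by
    rw [step1, step2, step3, step4, step5, step6, step7]
  rw [setAverage_eq, measureReal_def, htotal, Complex.volume_closedBall]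
  have : ((ENNReal.ofReal r ^ 2 * NNReal.pi).toReal) = r^2 * Real.pi := by
    rw [ENNReal.toReal_mul, ENNReal.toReal_pow, ENNReal.toReal_ofReal hr.le]
    simp
  rw [this]
  have hpos : r^2 * Real.pi > 0 := by positivity
  field_simp
  calc _ = (r^2 * r⁻¹^2) * (Real.pi * Real.pi⁻¹) * φ c := by ring
    _ = φ c := by rw [← mul_pow, mul_inv_cancel₀ hr.ne', mul_inv_cancel₀ Real.pi_ne_zero]; ring

end AuxB

section AuxC
open Metric Set Filter


lemma maxPrinciple (Ω : Set ℂ) (hopen : IsOpen Ω) (hconn : IsConnected Ω)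
    (hbdd : Bornology.IsBounded Ω)
    (v : ℂ → ℝ) (hc : ContinuousOn v Ω)
    (hsm : ∀ z r, 0 < r → closedBall z r ⊆ Ω → v z ≤ ⨍ w in closedBall z r, v w)
    (hub : ∀ z ∈ Ω, v z ≤ 1)
    (hbd : ∀ ζ ∈ frontier Ω, Filter.limsup v (nhdsWithin ζ Ω) ≤ 0) :
    ∀ x ∈ Ω, v x ≤ 0 := by
  by_contra hcon
  push_neg at hcon
  obtain ⟨x₀, hx₀, hv₀⟩ := hcon
  set c := v x₀ with hc0
  set A := {z | z ∈ Ω ∧ c ≤ v z} with hA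
  have hA_ne : x₀ ∈ A := ⟨hx₀, le_refl _⟩
  -- boundedness of v along boundary filters
  have hBdd : ∀ ζ : ℂ, Filter.IsBoundedUnder (· ≤ ·) (nhdsWithin ζ Ω) v := by
    intro ζ
    refine ⟨1, ?_⟩
    rw [Filter.eventually_map]
    exact eventually_nhdsWithin_of_forall hub
  -- the closure of A stays inside Ω
  have hTsub : closure A ⊆ Ω := by
    intro t ht
    have htΩ : t ∈ closure Ω := closure_mono (fun z hz => hz.1) ht
    by_cases htm : t ∈ Ω
    · exact htm
    exfalso
    have hfr : t ∈ frontier Ω := by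
      rw [frontier, hopen.interior_eq]
      exact ⟨htΩ, htm⟩
    have hNB : (nhdsWithin t A).NeBot := mem_closure_iff_nhdsWithin_neBot.1 ht
    have hfreq : ∃ᶠ z in nhdsWithin t Ω, c ≤ v z := by
      have hev : ∀ᶠ z in nhdsWithin t A, c ≤ v z :=
        eventually_nhdsWithin_of_forall (fun z hz => hz.2)
      exact hev.frequently.filter_mono (nhdsWithin_mono t (fun z hz => hz.1))
    have h1 := le_limsup_of_frequently_le hfreq (hBdd t)
    have h2 := hbd t hfr
    linarith
  have hT : IsCompact (closure A) :=
    (hbdd.subset (fun z (hz : z ∈ A) => hz.1)).isCompact_closure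
  -- maximum attained
  obtain ⟨z₀, hz₀T, hmax⟩ := hT.exists_isMaxOn ⟨x₀, subset_closure hA_ne⟩ (hc.mono hTsub)
  set M := v z₀ with hM
  have hMc : c ≤ M := hmax (subset_closure hA_ne)
  have hMpos : 0 < M := lt_of_lt_of_le hv₀ hMc
  have hz₀Ω : z₀ ∈ Ω := hTsub hz₀T
  have hle : ∀ z ∈ Ω, v z ≤ M := by
    intro z hz
    by_cases hcz : c ≤ v z
    · exact hmax (subset_closure ⟨hz, hcz⟩)
    · push_neg at hcz; linarith
  -- the set where the max is attained is open
  set E := {z | z ∈ Ω ∧ v z = M} with hE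
  have hEopen : IsOpen E := by
    rw [Metric.isOpen_iff]
    intro z hz
    obtain ⟨ε, hε, hball⟩ := Metric.isOpen_iff.1 hopen z hz.1
    set r := ε/2 with hrdef
    have hr : 0 < r := by positivity
    have hcb : closedBall z r ⊆ Ω :=
      subset_trans (closedBall_subset_ball (by simp [hrdef]; linarith)) hball
    refine ⟨r, hr, ?_⟩
    have hvol : 0 < (volume (closedBall z r)).toReal :=
      ENNReal.toReal_pos (measure_closedBall_pos volume z hr).ne' measure_closedBall_lt_top.ne
    have hvint : IntegrableOn v (closedBall z r) :=
      (hc.mono hcb).integrableOn_compact (isCompact_closedBall z r)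
    have hIub : ∫ w in closedBall z r, (M - v w)
        = M * (volume (closedBall z r)).toReal - ∫ w in closedBall z r, v w := by
      rw [integral_sub (integrableOn_const (C := M) measure_closedBall_lt_top.ne) hvint,
        setIntegral_const]
      simp [smul_eq_mul, mul_comm, measureReal_def]
    have havg := hsm z r hr hcb
    rw [hz.2, setAverage_eq, measureReal_def, smul_eq_mul] at havg
    have hIle : ∫ w in closedBall z r, (M - v w) ≤ 0 := by
      rw [hIub]
      have h2 : M * (volume (closedBall z r)).toReal
          ≤ ∫ w in closedBall z r, v w := by
        have h3 := mul_le_mul_of_nonneg_left havg hvol.le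
        rw [← mul_assoc, mul_inv_cancel₀ hvol.ne', one_mul] at h3
        linarith
      linarith
    have hnonneg : ∀ w ∈ closedBall z r, 0 ≤ M - v w := fun w hw =>
      sub_nonneg.2 (hle w (hcb hw))
    -- key: v = M on the ball
    intro w hw
    have hwΩ : w ∈ Ω := hcb (ball_subset_closedBall hw)
    refine ⟨hwΩ, ?_⟩
    by_contra hne
    have hwlt : v w < M := lt_of_le_of_ne (hle w hwΩ) hne
    set ε' := (M - v w)/2 with hε'
    have hε'pos : 0 < ε' := by simp only [hε']; linarith
    have hcw : ContinuousAt v w := hc.continuousAt (hopen.mem_nhds hwΩ)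
    have hpre : v ⁻¹' Set.Iio (M - ε') ∈ nhds w := by
      apply hcw.preimage_mem_nhds
      apply Iio_mem_nhds
      simp only [hε']; linarith
    obtain ⟨ρ₀, hρ₀pos, hρ₀⟩ := Metric.mem_nhds_iff.1 hpre
    set ρ := min (ρ₀/2) (r - dist w z) with hρdef
    have hρpos : 0 < ρ := by
      apply lt_min (by positivity)
      have := mem_ball.1 hw
      simp only [hrdef] at this ⊢
      linarith
    have hρball : ball w ρ ⊆ closedBall z r := by
      intro y hy
      rw [mem_closedBall]
      calc dist y z ≤ dist y w + dist w z := dist_triangle _ _ _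
        _ ≤ ρ + dist w z := by linarith [(mem_ball.1 hy).le]
        _ ≤ (r - dist w z) + dist w z := by linarith [min_le_right (ρ₀/2) (r - dist w z)]
        _ = r := by ring
    have hρsmall : ball w ρ ⊆ v ⁻¹' Set.Iio (M - ε') := fun y hy =>
      hρ₀ (ball_subset_ball (le_trans (min_le_left _ _) (by linarith)) hy)
    have hIlow : ε' * (volume (ball w ρ)).toReal ≤ ∫ w' in ball w ρ, (M - v w') := by
      have hint : IntegrableOn (fun w' => M - v w') (ball w ρ) :=
        (integrableOn_const (C := M) measure_ball_lt_top.ne).sub (hvint.mono_set hρball)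
      have hptwise : ∀ y ∈ ball w ρ, (fun _ => ε') y ≤ M - v y := by
        intro y hy
        have := hρsmall hy
        simp only [Set.mem_preimage, Set.mem_Iio] at this
        simp only [hε']
        linarith
      have hmono1 := setIntegral_mono_on (integrableOn_const (C := ε') measure_ball_lt_top.ne)
        hint measurableSet_ball hptwise
      rw [setIntegral_const, smul_eq_mul, measureReal_def] at hmono1
      linarith
    have hmono : ∫ w' in ball w ρ, (M - v w') ≤ ∫ w' in closedBall z r, (M - v w') := by
      apply setIntegral_mono_set
      · exact (integrableOn_const (C := M) measure_closedBall_lt_top.ne).sub hvint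
      · rw [EventuallyLE]
        rw [ae_restrict_iff' measurableSet_closedBall]
        exact Filter.Eventually.of_forall hnonneg
      · exact HasSubset.Subset.eventuallyLE hρball
    have hvolρ : 0 < (volume (ball w ρ)).toReal :=
      ENNReal.toReal_pos (measure_ball_pos volume w hρpos).ne' measure_ball_lt_top.ne
    nlinarith
  -- the complement within Ω is open
  set F := {z | z ∈ Ω ∧ v z < M} with hF
  have hFopen : IsOpen F := by
    have hFeq : F = Ω ∩ v ⁻¹' Set.Iio M := rfl
    rw [hFeq]
    exact hc.isOpen_inter_preimage hopen isOpen_Iio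
  have hsub : Ω ⊆ E ∪ F := by
    intro z hz
    rcases eq_or_lt_of_le (hle z hz) with he | hlt
    · exact Or.inl ⟨hz, he⟩
    · exact Or.inr ⟨hz, hlt⟩
  have hdisj : Disjoint E F := by
    rw [Set.disjoint_left]
    rintro z ⟨_, hzE⟩ ⟨_, hzF⟩
    rw [hzE] at hzF
    exact lt_irrefl _ hzF
  have hEΩ : Ω ⊆ E :=
    hconn.isPreconnected.subset_left_of_subset_union hEopen hFopen hdisj hsub
      ⟨z₀, hz₀Ω, hz₀Ω, rfl⟩
  -- conclude via a boundary point
  have hfr_ne : (frontier Ω).Nonempty := by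
    by_contra hemp
    rw [Set.not_nonempty_iff_eq_empty] at hemp
    rcases frontier_eq_empty_iff.1 hemp with h0 | h0
    · exact hconn.nonempty.ne_empty h0
    · obtain ⟨C, hC⟩ := hbdd.subset_closedBall 0
      have := hC (by rw [h0]; trivial : (C+1 : ℂ) ∈ Ω)
      rw [mem_closedBall] at this
      simp only [Complex.dist_eq, sub_zero] at this
      have habs : ‖(C:ℂ)+1‖ = |C + 1| := by
        rw [show ((C:ℂ)+1) = ((C+1 : ℝ) : ℂ) by push_cast; ring, Complex.norm_real, Real.norm_eq_abs]
      rw [habs] at this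
      rcases le_or_gt 0 C with h | h
      · rw [abs_of_nonneg (by linarith)] at this; linarith
      · have : ‖(C:ℂ)+1‖ ≤ C := by rwa [habs]
        have h2 : (0:ℝ) ≤ |C+1| := abs_nonneg _
        rw [habs] at *
        linarith [this]
  obtain ⟨ζ, hζ⟩ := hfr_ne
  have hζcl : ζ ∈ closure Ω := frontier_subset_closure hζ
  have hNB : (nhdsWithin ζ Ω).NeBot := mem_closure_iff_nhdsWithin_neBot.1 hζcl
  have hfreq : ∃ᶠ z in nhdsWithin ζ Ω, M ≤ v z := by
    apply Filter.Eventually.frequently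
    exact eventually_nhdsWithin_of_forall (fun z hz => ((hEΩ hz).2).ge)
  have h1 := le_limsup_of_frequently_le hfreq (hBdd ζ)
  have h2 := hbd ζ hζ
  linarith







lemma limsup_le_zero_of_eventually (l : Filter ℂ) [l.NeBot] (v : ℂ → ℝ)
    (hv : ∀ ε > 0, ∀ᶠ z in l, v z ≤ ε) : Filter.limsup v l ≤ 0 := by
  by_cases hcb : l.IsCoboundedUnder (· ≤ ·) v
  · by_contra hcon
    push_neg at hcon
    have h2 := Filter.limsup_le_of_le hcb (hv (Filter.limsup v l / 2) (by linarith))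
    linarith
  · rw [Filter.limsup_eq, Real.sInf_of_not_bddBelow]
    intro ⟨b, hb⟩
    exact hcb ⟨b, fun a ha => hb ha⟩

/-- Beurling-type estimate for harmonic measure, stated through subharmonic competitors:
if `Ω ⊆ B(a,R)` is a nonempty connected open set in `ℂ`, `K ⊆ ∂Ω` is a nonempty compact set
of diameter `δ` with `0 < δ ≤ R/2`, and `h` is a continuous subharmonic function on `Ω`
(sub-mean-value property on closed balls), bounded by `1`, whose limsup at every boundary
point off `K` is `≤ 0`, then `h(x) ≤ log(2R/dist(x,K)) / log(R/δ)` for every `x ∈ Ω`. -/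
theorem harmonic_measure_log_estimate
    (a : ℂ) (R : ℝ) (hR : 0 < R)
    (Ω : Set ℂ) (hΩopen : IsOpen Ω) (hΩconn : IsConnected Ω) (hΩsub : Ω ⊆ Metric.ball a R)
    (K : Set ℂ) (hKcpt : IsCompact K) (hKne : K.Nonempty) (hKsub : K ⊆ frontier Ω)
    (hδpos : 0 < Metric.diam K) (hδle : Metric.diam K ≤ R / 2)
    (x : ℂ) (hx : x ∈ Ω)
    (h : ℂ → ℝ) (hcont : ContinuousOn h Ω)
    (hsubmean : ∀ (z : ℂ) (r : ℝ), 0 < r → Metric.closedBall z r ⊆ Ω →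
      h z ≤ ⨍ w in Metric.closedBall z r, h w)
    (hbound : ∀ z ∈ Ω, h z ≤ 1)
    (hlimsup : ∀ ζ ∈ frontier Ω \ K, Filter.limsup h (nhdsWithin ζ Ω) ≤ 0) :
    h x ≤ Real.log (2 * R / Metric.infDist x K) / Real.log (R / Metric.diam K) := by
  set δ := Metric.diam K with hδ
  obtain ⟨k, hkK, hdk⟩ := hKcpt.exists_infDist_eq_dist hKne x
  have hkfr : k ∈ frontier Ω := hKsub hkK
  have hkΩ : k ∉ Ω := by
    rw [hΩopen.frontier_eq] at hkfr
    exact hkfr.2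
  have hclsub : closure Ω ⊆ closedBall a R :=
    closure_minimal (fun z hz => ball_subset_closedBall (hΩsub hz)) Metric.isClosed_closedBall
  have hkball : k ∈ closedBall a R := hclsub (frontier_subset_closure hkfr)
  set L := Real.log (R / δ) with hL
  have hLpos : 0 < L := Real.log_pos (by rw [lt_div_iff₀ hδpos]; linarith)
  have hLeq : L = Real.log R - Real.log δ := Real.log_div hR.ne' hδpos.ne'
  set φ : ℂ → ℝ := fun z => Real.log (‖z - k‖) with hφ
  set u : ℂ → ℝ := fun z => (Real.log (2*R) - φ z)/L with hu
  set v : ℂ → ℝ := fun z => h z - u z with hv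
  -- basic distance facts
  have habs2R : ∀ z ∈ closure Ω, ‖z - k‖ ≤ 2*R := by
    intro z hz
    have h1 : dist z k ≤ dist z a + dist a k := dist_triangle _ _ _
    have h2 : dist z a ≤ R := mem_closedBall.1 (hclsub hz)
    have h3 : dist a k ≤ R := by rw [dist_comm]; exact mem_closedBall.1 hkball
    rw [← Complex.dist_eq]; linarith
  have habs_pos : ∀ z : ℂ, z ≠ k → 0 < ‖z - k‖ := by
    intro z hz
    simpa using (norm_pos_iff.mpr (sub_ne_zero.2 hz))
  have hΩne : ∀ z ∈ Ω, z ≠ k := fun z hz he => hkΩ (he ▸ hz)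
  -- φ is continuous away from k
  have hφcont : ∀ w : ℂ, w ≠ k → ContinuousAt φ w := by
    intro w hw
    apply ContinuousAt.log
    · exact (continuous_norm.comp (continuous_id.sub continuous_const)).continuousAt
    · exact (habs_pos w hw).ne'
  have hucont : ∀ w : ℂ, w ≠ k → ContinuousAt u w := by
    intro w hw
    exact (continuousAt_const.sub (hφcont w hw)).div_const L
  -- u is nonnegative on Ω (indeed on closure Ω minus k)
  have hu_nonneg : ∀ z ∈ closure Ω, z ≠ k → 0 ≤ u z := by
    intro z hz hzk
    have h1 : φ z ≤ Real.log (2*R) :=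
      Real.log_le_log (habs_pos z hzk) (habs2R z hz)
    apply div_nonneg (by linarith) hLpos.le
  -- u ≥ 1 close to K
  have hu_ge1 : ∀ w : ℂ, w ≠ k → ‖w - k‖ ≤ δ → 1 ≤ u w := by
    intro w hwk hwδ
    have h1 : φ w ≤ Real.log δ := Real.log_le_log (habs_pos w hwk) hwδ
    have h2 : Real.log R ≤ Real.log (2*R) := Real.log_le_log hR (by linarith)
    show 1 ≤ (Real.log (2*R) - φ w)/L
    rw [le_div_iff₀ hLpos, one_mul, hLeq]
    linarith
  -- v is bounded by 1 on Ω
  have hub : ∀ z ∈ Ω, v z ≤ 1 := by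
    intro z hz
    have := hu_nonneg z (subset_closure hz) (hΩne z hz)
    have hb := hbound z hz
    simp only [hv]
    linarith
  -- v is continuous on Ω
  have hvcont : ContinuousOn v Ω := by
    apply hcont.sub
    intro z hz
    exact (hucont z (hΩne z hz)).continuousWithinAt
  -- submean property of v
  have hvsub : ∀ z r, 0 < r → closedBall z r ⊆ Ω → v z ≤ ⨍ w in closedBall z r, v w := by
    intro z r hr hcb
    have hknb : k ∉ closedBall z r := fun hk' => hkΩ (hcb hk')
    have hballne : ∀ w ∈ closedBall z r, w ≠ k := fun w hw he => hknb (he ▸ hw)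
    have hmean : ⨍ w in closedBall z r, φ w = φ z := logBallAvg k z r hr hknb
    have hφint : IntegrableOn φ (closedBall z r) := by
      apply ContinuousOn.integrableOn_compact (isCompact_closedBall z r)
      exact fun w hw => (hφcont w (hballne w hw)).continuousWithinAt
    have huint : IntegrableOn u (closedBall z r) := by
      apply ContinuousOn.integrableOn_compact (isCompact_closedBall z r)
      exact fun w hw => (hucont w (hballne w hw)).continuousWithinAt
    have hhint : IntegrableOn h (closedBall z r) := by
      apply ContinuousOn.integrableOn_compact (isCompact_closedBall z r)
      exact hcont.mono hcb
    have hvolpos : 0 < (volume (closedBall z r)).toReal :=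
      ENNReal.toReal_pos (measure_closedBall_pos volume z hr).ne' measure_closedBall_lt_top.ne
    -- average of u equals u z
    have hφeq : ∫ w in closedBall z r, φ w = (volume (closedBall z r)).toReal * φ z := by
      rw [setAverage_eq, measureReal_def, smul_eq_mul] at hmean
      rw [← inv_mul_eq_iff_eq_mul₀ hvolpos.ne']
      exact hmean
    have huavg : ⨍ w in closedBall z r, u w = u z := by
      have hsplit : ∫ w in closedBall z r, u w
          = ((Real.log (2*R)) * (volume (closedBall z r)).toReal
            - ∫ w in closedBall z r, φ w)/L := by
        simp only [hu, div_eq_mul_inv, sub_mul]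
        rw [integral_sub ((integrableOn_const (C := Real.log (2*R)) measure_closedBall_lt_top.ne).mul_const _)
          (hφint.mul_const _), integral_mul_const, integral_mul_const, setIntegral_const, measureReal_def,
          smul_eq_mul]
        ring
      rw [setAverage_eq, measureReal_def, hsplit, hφeq, smul_eq_mul]
      show (volume (closedBall z r)).toReal⁻¹
          * ((Real.log (2*R) * (volume (closedBall z r)).toReal
            - (volume (closedBall z r)).toReal * φ z)/L)
          = (Real.log (2*R) - φ z)/L
      field_simp
    have hveq : ⨍ w in closedBall z r, v w
        = (⨍ w in closedBall z r, h w) - ⨍ w in closedBall z r, u w := by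
      rw [setAverage_eq, setAverage_eq, setAverage_eq, ← smul_sub, ← integral_sub hhint huint]
    rw [hveq, huavg]
    have := hsubmean z r hr hcb
    simp only [hv]
    linarith
  -- boundary behaviour of v
  have hvbd : ∀ ζ ∈ frontier Ω, Filter.limsup v (nhdsWithin ζ Ω) ≤ 0 := by
    intro ζ hζ
    have hζcl : ζ ∈ closure Ω := frontier_subset_closure hζ
    have hNB : (nhdsWithin ζ Ω).NeBot := mem_closure_iff_nhdsWithin_neBot.1 hζcl
    have hev_h1 : ∀ᶠ z in nhdsWithin ζ Ω, h z ≤ 1 := eventually_nhdsWithin_of_forall hbound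
    apply limsup_le_zero_of_eventually
    intro ε hε
    by_cases hζk : ζ = k
    · -- at k itself, u ≥ 1 eventually
      have hball : Metric.ball ζ δ ∈ nhdsWithin ζ Ω := by
        apply nhdsWithin_le_nhds
        exact Metric.ball_mem_nhds ζ hδpos
      have hevΩ : ∀ᶠ z in nhdsWithin ζ Ω, z ∈ Ω := eventually_mem_nhdsWithin
      filter_upwards [hev_h1, Filter.eventually_mem_set.2 hball, hevΩ] with z h1 h2 h3
      have hu1 : 1 ≤ u z := hu_ge1 z (hΩne z h3) (by
        rw [← Complex.dist_eq, ← hζk]; exact (mem_ball.1 h2).le)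
      simp only [hv]
      linarith
    · -- away from k, u is continuous
      have htend : Filter.Tendsto u (nhdsWithin ζ Ω) (nhds (u ζ)) :=
        ((hucont ζ hζk).tendsto).mono_left nhdsWithin_le_nhds
      have hev_u : ∀ᶠ z in nhdsWithin ζ Ω, u ζ - ε/2 < u z := by
        have : Set.Ioi (u ζ - ε/2) ∈ nhds (u ζ) := Ioi_mem_nhds (by linarith)
        exact htend this
      by_cases hζK : ζ ∈ K
      · -- on K, u ζ ≥ 1
        have hu1 : 1 ≤ u ζ := by
          apply hu_ge1 ζ hζk
          rw [← Complex.dist_eq]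
          exact Metric.dist_le_diam_of_mem hKcpt.isBounded hζK hkK
        filter_upwards [hev_h1, hev_u] with z h1 h2
        simp only [hv]
        linarith
      · -- off K, limsup h ≤ 0
        have hls := hlimsup ζ ⟨hζ, hζK⟩
        have hBddh : (nhdsWithin ζ Ω).IsBoundedUnder (· ≤ ·) h := ⟨1, by
          rw [Filter.eventually_map]; exact hev_h1⟩
        have hev_h : ∀ᶠ z in nhdsWithin ζ Ω, h z < ε/2 :=
          Filter.eventually_lt_of_limsup_lt (lt_of_le_of_lt hls (by linarith)) hBddh
        have hu0 : 0 ≤ u ζ := hu_nonneg ζ hζcl hζk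
        filter_upwards [hev_h, hev_u] with z h1 h2
        simp only [hv]
        linarith
  -- apply the maximum principle
  have hbdd : Bornology.IsBounded Ω := (Metric.isBounded_ball).subset hΩsub
  have hvx := maxPrinciple Ω hΩopen hΩconn hbdd v hvcont hvsub hub hvbd x hx
  -- translate the conclusion
  have hxk : x ≠ k := hΩne x hx
  have hd0 : 0 < Metric.infDist x K := by
    rw [hdk, Complex.dist_eq]
    exact habs_pos x hxk
  have heq : Real.log (2 * R / Metric.infDist x K) = Real.log (2*R) - φ x := by
    rw [Real.log_div (by linarith) hd0.ne', hdk, Complex.dist_eq]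
  rw [heq]
  have hux : u x = (Real.log (2*R) - φ x)/L := rfl
  simp only [hv] at hvx
  linarith [hvx, hux.ge, hux.le]

end AuxC
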